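/- The martingale difference noise M_{j,k+1} := z_j b_j sin(Ω_j k̂ + φ_j)(r̃_{j,k+1} − E_S[r_j(S, a_{k+1})]) satisfies the conditional second moment bound E[‖M_{k+1}‖² | ℱ_k] ≤ c(1 + ‖a_k‖²) for a constant c ≥ 4 z² b² (β + L̇), where z = max_j |z_j|, b = max_j |b_j|, β = E_S[β_{1,S}²] + β_2², β_{1,S} = ‖r(S,0)‖, β_2 = E_S‖r(S,0)‖, and L̇ = E_S[L_S²] + (E_S L_S)². -/
import Mathlib


open MeasureTheory

/-- Second moment bound on the martingale difference noise
`M(S) = z b sin(θ) (r(S,a) − E_S r(S,a))`: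
`E_S ‖M‖² ≤ c (1 + ‖a‖²)` for any `c ≥ 4 z² b² (β + L̇)`, where
`β = E_S[‖r(S,0)‖²] + (E_S‖r(S,0)‖)²` and `L̇ = E_S[L_S²] + (E_S L_S)²`. -/
theorem martingale_noise_second_moment_bound
    {S : Type*} [MeasurableSpace S] (μ : Measure S) [IsProbabilityMeasure μ]
    {A : Type*} [NormedAddCommGroup A] [NormedSpace ℝ A]
    (r : S → A → ℝ) (L : S → ℝ) (hL0 : ∀ s, 0 ≤ L s)
    (hLip : ∀ s a a', |r s a - r s a'| ≤ L s * ‖a - a'‖)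
    (hLint : Integrable L μ) (hL2int : Integrable (fun s => (L s) ^ 2) μ)
    (hr0int : Integrable (fun s => |r s 0|) μ)
    (hr0sqint : Integrable (fun s => (|r s 0|) ^ 2) μ)
    (hrint : ∀ a, Integrable (fun s => r s a) μ)
    (z b θ : ℝ) (a : A)
    (hMint : Integrable
      (fun s => (z * b * Real.sin θ * (r s a - ∫ s', r s' a ∂μ)) ^ 2) μ)
    (c : ℝ)
    (hc : 4 * z ^ 2 * b ^ 2 *
        ((∫ s, (|r s 0|) ^ 2 ∂μ) + (∫ s, |r s 0| ∂μ) ^ 2 +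
          ((∫ s, (L s) ^ 2 ∂μ) + (∫ s, L s ∂μ) ^ 2)) ≤ c) :
    (∫ s, (z * b * Real.sin θ * (r s a - ∫ s', r s' a ∂μ)) ^ 2 ∂μ)
      ≤ c * (1 + ‖a‖ ^ 2) := by
  set I : ℝ := ∫ s', r s' a ∂μ with hIdef
  set B0 : ℝ := ∫ s, |r s 0| ∂μ with hB0def
  set BL : ℝ := ∫ s, L s ∂μ with hBLdef
  set K : ℝ := 4 * z ^ 2 * b ^ 2 with hKdef
  have hKnn : 0 ≤ K := by positivity
  have hB0nn : 0 ≤ B0 := integral_nonneg fun s => abs_nonneg _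
  have hBLnn : 0 ≤ BL := integral_nonneg fun s => hL0 s
  have habs : ∀ s, |r s a| ≤ |r s 0| + L s * ‖a‖ := by
    intro s
    have h1 := hLip s a 0
    simp only [sub_zero] at h1
    calc |r s a| = |r s 0 + (r s a - r s 0)| := by ring_nf
      _ ≤ |r s 0| + |r s a - r s 0| := abs_add_le _ _
      _ ≤ |r s 0| + L s * ‖a‖ := by linarith
  have hra_int : Integrable (fun s => |r s a|) μ := (hrint a).abs
  have hbound_int : Integrable (fun s => |r s 0| + L s * ‖a‖) μ :=
    hr0int.add (hLint.mul_const _)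
  have hI : |I| ≤ B0 + BL * ‖a‖ := by
    calc |I| ≤ ∫ s, |r s a| ∂μ := by
          simpa [Real.norm_eq_abs] using
            norm_integral_le_integral_norm (μ := μ) (f := fun s => r s a)
      _ ≤ ∫ s, (|r s 0| + L s * ‖a‖) ∂μ :=
          integral_mono hra_int hbound_int habs
      _ = B0 + BL * ‖a‖ := by
          rw [integral_add (f := fun s => |r s 0|) (g := fun s => L s * ‖a‖)
                hr0int (hLint.mul_const _), integral_mul_const]
  -- pointwise bound
  have hpt : ∀ s, (z * b * Real.sin θ * (r s a - I)) ^ 2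
      ≤ K * ((|r s 0|) ^ 2 + B0 ^ 2 + (L s) ^ 2 * ‖a‖ ^ 2 + BL ^ 2 * ‖a‖ ^ 2) := by
    intro s
    have hsin : (Real.sin θ) ^ 2 ≤ 1 := by
      have := Real.neg_one_le_sin θ
      have := Real.sin_le_one θ
      nlinarith
    have hdiff : |r s a - I| ≤ |r s 0| + L s * ‖a‖ + (B0 + BL * ‖a‖) := by
      calc |r s a - I| ≤ |r s a| + |I| := abs_sub _ _
        _ ≤ (|r s 0| + L s * ‖a‖) + (B0 + BL * ‖a‖) := add_le_add (habs s) hI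
    have h4 : (r s a - I) ^ 2 ≤
        4 * ((|r s 0|) ^ 2 + (L s * ‖a‖) ^ 2 + B0 ^ 2 + (BL * ‖a‖) ^ 2) := by
      have h0 : (r s a - I) ^ 2 = |r s a - I| ^ 2 := (sq_abs _).symm
      rw [h0]
      have hnn : (0:ℝ) ≤ |r s a - I| := abs_nonneg _
      nlinarith [sq_nonneg (|r s 0| - L s * ‖a‖), sq_nonneg (|r s 0| - B0),
        sq_nonneg (|r s 0| - BL * ‖a‖), sq_nonneg (L s * ‖a‖ - B0),
        sq_nonneg (L s * ‖a‖ - BL * ‖a‖), sq_nonneg (B0 - BL * ‖a‖)]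
    have : (z * b * Real.sin θ * (r s a - I)) ^ 2
        = (z ^ 2 * b ^ 2) * (Real.sin θ) ^ 2 * (r s a - I) ^ 2 := by ring
    rw [this]
    have hzb : (0:ℝ) ≤ z ^ 2 * b ^ 2 := by positivity
    have hsq : (0:ℝ) ≤ (r s a - I) ^ 2 := sq_nonneg _
    calc (z ^ 2 * b ^ 2) * (Real.sin θ) ^ 2 * (r s a - I) ^ 2
        ≤ (z ^ 2 * b ^ 2) * 1 * (r s a - I) ^ 2 := by
          apply mul_le_mul_of_nonneg_right _ hsq
          exact mul_le_mul_of_nonneg_left hsin hzb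
      _ ≤ (z ^ 2 * b ^ 2) * 1 *
          (4 * ((|r s 0|) ^ 2 + (L s * ‖a‖) ^ 2 + B0 ^ 2 + (BL * ‖a‖) ^ 2)) := by
          apply mul_le_mul_of_nonneg_left h4; positivity
      _ = K * ((|r s 0|) ^ 2 + B0 ^ 2 + (L s) ^ 2 * ‖a‖ ^ 2 + BL ^ 2 * ‖a‖ ^ 2) := by
          rw [hKdef]; ring
  -- integrability of the bound
  have hg_int : Integrable
      (fun s => K * ((|r s 0|) ^ 2 + B0 ^ 2 + (L s) ^ 2 * ‖a‖ ^ 2 + BL ^ 2 * ‖a‖ ^ 2)) μ := by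
    apply Integrable.const_mul
    exact ((hr0sqint.add (integrable_const _)).add (hL2int.mul_const _)).add
      (integrable_const _)
  have hmono := integral_mono hMint hg_int hpt
  have hgval : (∫ s, K * ((|r s 0|) ^ 2 + B0 ^ 2 + (L s) ^ 2 * ‖a‖ ^ 2 + BL ^ 2 * ‖a‖ ^ 2) ∂μ)
      = K * ((∫ s, (|r s 0|) ^ 2 ∂μ) + B0 ^ 2 + (∫ s, (L s) ^ 2 ∂μ) * ‖a‖ ^ 2
          + BL ^ 2 * ‖a‖ ^ 2) := by
    rw [integral_const_mul]
    congr 1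
    have h1 : ∀ s : S, (|r s 0|) ^ 2 + B0 ^ 2 + (L s) ^ 2 * ‖a‖ ^ 2 + BL ^ 2 * ‖a‖ ^ 2
        = ((|r s 0|) ^ 2 + (L s) ^ 2 * ‖a‖ ^ 2) + (B0 ^ 2 + BL ^ 2 * ‖a‖ ^ 2) :=
      fun s => by ring
    simp_rw [h1]
    have e1 : (∫ s, ((|r s 0|) ^ 2 + (L s) ^ 2 * ‖a‖ ^ 2) ∂μ)
        = (∫ s, (|r s 0|) ^ 2 ∂μ) + (∫ s, (L s) ^ 2 ∂μ) * ‖a‖ ^ 2 := by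
      rw [integral_add (f := fun s => (|r s 0|) ^ 2) (g := fun s => (L s) ^ 2 * ‖a‖ ^ 2)
            hr0sqint (hL2int.mul_const _), integral_mul_const]
    rw [integral_add (f := fun s => (|r s 0|) ^ 2 + (L s) ^ 2 * ‖a‖ ^ 2)
          (g := fun _ => B0 ^ 2 + BL ^ 2 * ‖a‖ ^ 2)
          (hr0sqint.add (hL2int.mul_const _)) (integrable_const _), e1,
      integral_const]
    simp [measure_univ]
    ring
  rw [hgval] at hmono
  have hr0sq_nn : 0 ≤ ∫ s, (|r s 0|) ^ 2 ∂μ := integral_nonneg fun s => sq_nonneg _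
  have hL2_nn : 0 ≤ ∫ s, (L s) ^ 2 ∂μ := integral_nonneg fun s => sq_nonneg _
  have hfinal : K * ((∫ s, (|r s 0|) ^ 2 ∂μ) + B0 ^ 2 + (∫ s, (L s) ^ 2 ∂μ) * ‖a‖ ^ 2
      + BL ^ 2 * ‖a‖ ^ 2) ≤ c * (1 + ‖a‖ ^ 2) := by
    have hcq : K * ((∫ s, (|r s 0|) ^ 2 ∂μ) + B0 ^ 2 + ((∫ s, (L s) ^ 2 ∂μ) + BL ^ 2)) ≤ c := hc
    have hq : 0 ≤ ‖a‖ ^ 2 := sq_nonneg _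
    nlinarith [mul_le_mul_of_nonneg_right hcq hq,
      mul_nonneg (mul_nonneg hKnn hr0sq_nn) hq,
      mul_nonneg (mul_nonneg hKnn (sq_nonneg B0)) hq,
      mul_nonneg hKnn hL2_nn, mul_nonneg hKnn (sq_nonneg BL)]
  linarith
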